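/- Let Λ = ℚ[exterior generators x_1, …, x_n, y_1, …, y_n] be the free graded-commutative algebra with |x_i| = d (d even, so the x_i commute and x_i² ≠ 0) and |y_i| = 2d−1 (odd degree, so the y_i are exterior), with differential dx_i = 0, dy_i = x_i². Then every dg-algebra automorphism φ of Λ has the form φ(x_i) = λ_i x_{σ(i)}, φ(y_i) = λ_i² y_{σ(i)} for some permutation σ ∈ Σ_n and scalars λ_i ∈ ℚ^×; consequently Aut(Λ) ≅ Σ_n ⋉ (ℚ^×)^n. -/

import Mathlib

open MvPolynomial

/-- **Automorphisms of the minimal Sullivan model of `(S^d)^n`, `d` even.**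
A dg-algebra automorphism `φ` of `Λ = (Λ(x₁,…,xₙ,y₁,…,yₙ), dyᵢ = xᵢ²)` (with `|xᵢ| = d`
even, `|yᵢ| = 2d-1`) is determined by the invertible matrices `A`, `B` of its action on the
generators: `φ(xᵢ) = ∑ⱼ Aᵢⱼ xⱼ`, `φ(yᵢ) = ∑ⱼ Bᵢⱼ yⱼ`, subject to the compatibility with the
differential `φ(xᵢ²) = ∑ⱼ Bᵢⱼ xⱼ²`, i.e. `(∑ⱼ Aᵢⱼ xⱼ)² = ∑ⱼ Bᵢⱼ xⱼ²` in the polynomial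
algebra on the `xⱼ`.  Then every such automorphism is of the form `φ(xᵢ) = λᵢ x_{σ(i)}`,
`φ(yᵢ) = λᵢ² y_{σ(i)}` for a permutation `σ` and nonzero scalars `λᵢ`; consequently the
group of such pairs `(A, B)` is isomorphic to `Σₙ ⋉ (ℚˣ)ⁿ`. -/

lemma heval' {n : ℕ} (a b : Fin n → ℚ)
    (h : (∑ j : Fin n, MvPolynomial.C (a j) * X j) ^ 2 =
          ∑ j : Fin n, MvPolynomial.C (b j) * (X j : MvPolynomial (Fin n) ℚ) ^ 2)
    (v : Fin n → ℚ) :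
    (∑ j, a j * v j) ^ 2 = ∑ j, b j * v j ^ 2 := by
  have := congrArg (MvPolynomial.eval v) h
  simpa only [map_sum, map_pow, map_mul, eval_C, eval_X] using this

lemma hBval {n : ℕ} (a b : Fin n → ℚ)
    (h : ∀ v : Fin n → ℚ, (∑ j, a j * v j) ^ 2 = ∑ j, b j * v j ^ 2) (j : Fin n) :
    b j = a j ^ 2 := by
  have := h (fun k => if k = j then 1 else 0)
  simp [mul_ite, Finset.sum_ite_eq', ite_pow] at this
  exact this.symm

lemma hzero' {n : ℕ} (a b : Fin n → ℚ)
    (h : ∀ v : Fin n → ℚ, (∑ j, a j * v j) ^ 2 = ∑ j, b j * v j ^ 2)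
    {j k : Fin n} (hjk : j ≠ k) : a j * a k = 0 := by
  have hv := h (fun m => (if m = j then 1 else 0) + (if m = k then 1 else 0))
  have hsq : ∀ m : Fin n,
      ((if m = j then (1:ℚ) else 0) + (if m = k then 1 else 0)) ^ 2
        = (if m = j then 1 else 0) + (if m = k then 1 else 0) := by
    intro m
    by_cases h1 : m = j <;> by_cases h2 : m = k <;> simp_all
  simp only [hsq, mul_add, Finset.sum_add_distrib, mul_ite, mul_one, mul_zero,
    Finset.sum_ite_eq', Finset.mem_univ, if_true] at hv
  have hbj := hBval a b h j
  have hbk := hBval a b h k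
  nlinarith [hv, hbj, hbk]


lemma vecMul_eq_zero' {n : ℕ} {A : Matrix (Fin n) (Fin n) ℚ} (hA : IsUnit A)
    {v : Fin n → ℚ} (hv : Matrix.vecMul v A = 0) : v = 0 := by
  have hdet := (Matrix.isUnit_iff_isUnit_det A).mp hA
  have h1 : A * A⁻¹ = 1 := Matrix.mul_nonsing_inv A hdet
  calc v = Matrix.vecMul v (A * A⁻¹) := by rw [h1, Matrix.vecMul_one]
    _ = Matrix.vecMul (Matrix.vecMul v A) A⁻¹ := (Matrix.vecMul_vecMul _ _ _).symm
    _ = 0 := by rw [hv, Matrix.zero_vecMul]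

lemma part1 {n : ℕ} (A B : Matrix (Fin n) (Fin n) ℚ) (hA : IsUnit A)
    (h : ∀ v : Fin n → ℚ, ∀ i, (∑ j, A i j * v j) ^ 2 = ∑ j, B i j * v j ^ 2)
    (hzero : ∀ i, ∀ {j k : Fin n}, j ≠ k → A i j * A i k = 0)
    (hB : ∀ i j, B i j = A i j ^ 2) :
    ∃ (σ : Equiv.Perm (Fin n)) (lam : Fin n → ℚ),
        (∀ i, lam i ≠ 0) ∧
        (∀ i j, A i j = if j = σ i then lam i else 0) ∧
        (∀ i j, B i j = if j = σ i then (lam i) ^ 2 else 0) := by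
  -- each row nonzero
  have hrow : ∀ i, ∃ j, A i j ≠ 0 := by
    intro i
    by_contra hc
    push_neg at hc
    have hdet := (Matrix.isUnit_iff_isUnit_det A).mp hA
    exact hdet.ne_zero (Matrix.det_eq_zero_of_row_eq_zero i hc)
  choose c hc using hrow
  -- injectivity
  have hinj : Function.Injective c := by
    intro i1 i2 h12
    by_contra hne
    set j := c i1 with hj
    have hl1 : A i1 j ≠ 0 := hc i1
    have hne' : i2 ≠ i1 := fun h => hne h.symm
    have hl2 : A i2 j ≠ 0 := by rw [h12]; exact hc i2
    set v : Fin n → ℚ := fun i => if i = i1 then A i2 j else if i = i2 then -(A i1 j) else 0 with hv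
    have hrow1 : ∀ k, k ≠ j → A i1 k = 0 := by
      intro k hk
      have := hzero i1 hk
      exact (mul_eq_zero.mp this).resolve_right hl1
    have hrow2 : ∀ k, k ≠ j → A i2 k = 0 := by
      intro k hk
      have := hzero i2 hk
      exact (mul_eq_zero.mp this).resolve_right hl2
    have hvm : Matrix.vecMul v A = 0 := by
      funext k
      have : Matrix.vecMul v A k = ∑ i, v i * A i k := by
        simp [Matrix.vecMul, dotProduct]
      rw [this]
      rw [Finset.sum_eq_add_of_mem i1 i2 (Finset.mem_univ _) (Finset.mem_univ _) hne ?_]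
      · by_cases hk : k = j
        · subst hk; simp [hv, hne, hne']; ring
        · simp [hv, hne, hne', hrow1 k hk, hrow2 k hk]
      · intro m _ hm
        simp [hv, hm.1, hm.2]
    have := congrFun (vecMul_eq_zero' hA hvm) i1
    simp [hv] at this
    exact hl2 this
  have hbij : Function.Bijective c := Finite.injective_iff_bijective.mp hinj
  refine ⟨Equiv.ofBijective c hbij, fun i => A i (c i), fun i => hc i, ?_, ?_⟩
  · intro i j
    by_cases hj : j = c i
    · simp [Equiv.ofBijective, hj]
    · simp [Equiv.ofBijective, hj]
      have := hzero i (j := j) (k := c i) hj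
      exact (mul_eq_zero.mp this).resolve_right (hc i)
  · intro i j
    rw [hB]
    by_cases hj : j = c i
    · simp [Equiv.ofBijective, hj]
    · simp [Equiv.ofBijective, hj]
      have := hzero i (j := j) (k := c i) hj
      exact (mul_eq_zero.mp this).resolve_right (hc i)


def mono {n : ℕ} (σ : Equiv.Perm (Fin n)) (f : Fin n → ℚ) : Matrix (Fin n) (Fin n) ℚ :=
  Matrix.of fun i j => if j = σ i then f i else 0

lemma mono_mul {n : ℕ} (σ τ : Equiv.Perm (Fin n)) (f g : Fin n → ℚ) :
    mono σ f * mono τ g = mono (σ.trans τ) (fun i => f i * g (σ i)) := by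
  ext i j
  simp only [mono, Matrix.mul_apply, Matrix.of_apply, ite_mul, zero_mul]
  rw [Finset.sum_eq_single (σ i)]
  · simp [Equiv.trans]; congr
  · intro k _ hk; simp [hk]
  · simp

lemma mono_one {n : ℕ} : mono (1 : Equiv.Perm (Fin n)) (fun _ => 1) = 1 := by
  ext i j
  simp [mono, Matrix.one_apply, eq_comm]

def monoUnit {n : ℕ} (σ : Equiv.Perm (Fin n)) (f : Fin n → ℚˣ) : GL (Fin n) ℚ where
  val := mono σ (fun i => f i)
  inv := mono σ⁻¹ (fun i => ((f (σ⁻¹ i))⁻¹ : ℚˣ))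
  val_inv := by
    rw [mono_mul]
    have : (σ.trans σ⁻¹) = 1 := by ext x; simp
    rw [this]
    rw [show (fun i => ((f i : ℚ)) * ((f (σ⁻¹ (σ i)))⁻¹ : ℚˣ)) = fun _ => 1 from ?_, mono_one]
    funext i; simp
  inv_val := by
    rw [mono_mul]
    have : (σ⁻¹.trans σ : Equiv.Perm (Fin n)) = 1 := by ext x; simp
    rw [this]
    rw [show (fun i => (((f (σ⁻¹ i))⁻¹ : ℚˣ) : ℚ) * (f (σ⁻¹ i))) = fun _ => 1 from ?_, mono_one]
    funext i; simp

@[simp] lemma monoUnit_val {n : ℕ} (σ : Equiv.Perm (Fin n)) (f : Fin n → ℚˣ) :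
    (monoUnit σ f : Matrix (Fin n) (Fin n) ℚ) = mono σ (fun i => f i) := rfl

def Phi {n : ℕ} (φact : Equiv.Perm (Fin n) →* MulAut (Fin n → ℚˣ))
    (hφact : ∀ (σ : Equiv.Perm (Fin n)) (f : Fin n → ℚˣ) (i : Fin n),
      φact σ f i = f (σ⁻¹ i)) :
    SemidirectProduct (Fin n → ℚˣ) (Equiv.Perm (Fin n)) φact →* GL (Fin n) ℚ × GL (Fin n) ℚ where
  toFun p := (monoUnit p.right⁻¹ p.left, monoUnit p.right⁻¹ (fun i => (p.left i) ^ 2))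
  map_one' := by
    refine Prod.ext (Units.ext ?_) (Units.ext ?_) <;>
      simp [monoUnit_val, ← mono_one] <;> rfl
  map_mul' p q := by
    rw [Prod.mk_mul_mk]
    refine Prod.ext (Units.ext ?_) (Units.ext ?_) <;>
    · rw [Units.val_mul, monoUnit_val, monoUnit_val, monoUnit_val, mono_mul]
      ext i j
      simp [mono, hφact, mul_pow, Equiv.Perm.mul_apply, Equiv.trans_apply]; congr

lemma Phi_injective {n : ℕ} (φact : Equiv.Perm (Fin n) →* MulAut (Fin n → ℚˣ))
    (hφact : ∀ (σ : Equiv.Perm (Fin n)) (f : Fin n → ℚˣ) (i : Fin n),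
      φact σ f i = f (σ⁻¹ i)) : Function.Injective (Phi φact hφact) := by
  rw [injective_iff_map_eq_one]
  intro p hp
  have h1 : (monoUnit p.right⁻¹ p.left : Matrix (Fin n) (Fin n) ℚ) = 1 := by
    have := congrArg (fun x => ((Prod.fst x : GL (Fin n) ℚ) : Matrix (Fin n) (Fin n) ℚ)) hp
    simpa [Phi] using this
  have hfix : ∀ i, p.right⁻¹ i = i ∧ (p.left i : ℚ) = 1 := by
    intro i
    have h2 := congrFun (congrFun h1 i) (p.right⁻¹ i)
    simp only [monoUnit_val, mono, Matrix.of_apply, if_pos rfl, Matrix.one_apply] at h2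
    rw [if_pos trivial] at h2
    by_cases hii : i = p.right⁻¹ i
    · rw [if_pos hii] at h2
      exact ⟨hii.symm, h2⟩
    · rw [if_neg hii] at h2
      exact absurd h2 (p.left i).ne_zero
  have hright : p.right = 1 := by
    have : p.right⁻¹ = 1 := Equiv.ext fun i => (hfix i).1
    simpa using congrArg (·⁻¹) this
  have hleft : p.left = 1 := funext fun i => Units.ext (hfix i).2
  exact SemidirectProduct.ext hleft hright

lemma sum_C_ite {n : ℕ} (j0 : Fin n) (c : ℚ)
    (F : Fin n → MvPolynomial (Fin n) ℚ) :
    ∑ j, C (if j = j0 then c else 0) * F j = C c * F j0 := by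
  rw [Finset.sum_eq_single j0]
  · simp
  · intro k _ hk; simp [hk]
  · simp

lemma mono_cond {n : ℕ} (σ : Equiv.Perm (Fin n)) (f : Fin n → ℚ) (i : Fin n) :
    (∑ j : Fin n, MvPolynomial.C (mono σ f i j) * X j) ^ 2 =
      ∑ j : Fin n, MvPolynomial.C (mono σ (fun k => f k ^ 2) i j) *
        (X j : MvPolynomial (Fin n) ℚ) ^ 2 := by
  show (∑ j : Fin n, C (if j = σ i then f i else 0) * X j) ^ 2
      = ∑ j : Fin n, C (if j = σ i then f i ^ 2 else 0) * (X j : MvPolynomial (Fin n) ℚ) ^ 2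
  rw [sum_C_ite, sum_C_ite (σ i) (f i ^ 2) (fun j => X j ^ 2)]
  rw [mul_pow, ← C_pow]

lemma classify {n : ℕ} (A B : Matrix (Fin n) (Fin n) ℚ) (hA : IsUnit A)
    (hcond : ∀ i : Fin n,
        (∑ j : Fin n, MvPolynomial.C (A i j) * X j) ^ 2 =
          ∑ j : Fin n, MvPolynomial.C (B i j) * (X j : MvPolynomial (Fin n) ℚ) ^ 2) :
    ∃ (σ : Equiv.Perm (Fin n)) (lam : Fin n → ℚ),
        (∀ i, lam i ≠ 0) ∧
        (∀ i j, A i j = if j = σ i then lam i else 0) ∧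
        (∀ i j, B i j = if j = σ i then (lam i) ^ 2 else 0) := by
  have hev : ∀ i (v : Fin n → ℚ), (∑ j, A i j * v j) ^ 2 = ∑ j, B i j * v j ^ 2 :=
    fun i v => heval' (A i) (B i) (hcond i) v
  exact part1 A B hA (fun v i => hev i v) (fun i _ _ hjk => hzero' (A i) (B i) (hev i) hjk)
    (fun i j => hBval (A i) (B i) (hev i) j)


theorem automorphisms_of_sullivan_model_even_spheres
    (n : ℕ)
    (φact : Equiv.Perm (Fin n) →* MulAut (Fin n → ℚˣ))
    (hφact : ∀ (σ : Equiv.Perm (Fin n)) (f : Fin n → ℚˣ) (i : Fin n),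
      φact σ f i = f (σ⁻¹ i)) :
    (∀ A B : Matrix (Fin n) (Fin n) ℚ, IsUnit A → IsUnit B →
      (∀ i : Fin n,
        (∑ j : Fin n, MvPolynomial.C (A i j) * X j) ^ 2 =
          ∑ j : Fin n, MvPolynomial.C (B i j) * (X j : MvPolynomial (Fin n) ℚ) ^ 2) →
      ∃ (σ : Equiv.Perm (Fin n)) (lam : Fin n → ℚ),
        (∀ i, lam i ≠ 0) ∧
        (∀ i j, A i j = if j = σ i then lam i else 0) ∧
        (∀ i j, B i j = if j = σ i then (lam i) ^ 2 else 0)) ∧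
    ∃ S : Subgroup (GL (Fin n) ℚ × GL (Fin n) ℚ),
      (∀ P : GL (Fin n) ℚ × GL (Fin n) ℚ,
        P ∈ S ↔ ∀ i : Fin n,
          (∑ j : Fin n, MvPolynomial.C ((P.1 : Matrix (Fin n) (Fin n) ℚ) i j) * X j) ^ 2 =
            ∑ j : Fin n, MvPolynomial.C ((P.2 : Matrix (Fin n) (Fin n) ℚ) i j) *
              (X j : MvPolynomial (Fin n) ℚ) ^ 2) ∧
      Nonempty (S ≃* SemidirectProduct (Fin n → ℚˣ) (Equiv.Perm (Fin n)) φact) := by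
  constructor
  · intro A B hA _ hcond
    exact classify A B hA hcond
  · refine ⟨(Phi φact hφact).range, ?_, ⟨(MonoidHom.ofInjective (Phi_injective φact hφact)).symm⟩⟩
    intro P
    constructor
    · rintro ⟨p, rfl⟩ i
      have := mono_cond p.right⁻¹ (fun k => (p.left k : ℚ)) i
      simpa [Phi, monoUnit_val, Units.val_pow_eq_pow_val] using this
    · intro hcond
      obtain ⟨σ, lam, hne, hAeq, hBeq⟩ :=
        classify (P.1 : Matrix (Fin n) (Fin n) ℚ) (P.2 : Matrix (Fin n) (Fin n) ℚ)
          P.1.isUnit hcond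
      refine ⟨⟨fun i => Units.mk0 (lam i) (hne i), σ⁻¹⟩, ?_⟩
      refine Prod.ext (Units.ext ?_) (Units.ext ?_)
      · show (mono σ⁻¹⁻¹ _ : Matrix (Fin n) (Fin n) ℚ) = (P.1 : Matrix (Fin n) (Fin n) ℚ)
        ext i j
        rw [inv_inv]
        simp only [mono, Matrix.of_apply]
        rw [hAeq i j]
        split <;> simp
      · show (mono σ⁻¹⁻¹ _ : Matrix (Fin n) (Fin n) ℚ) = (P.2 : Matrix (Fin n) (Fin n) ℚ)
        ext i j
        rw [inv_inv]
        simp only [mono, Matrix.of_apply]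
        rw [hBeq i j]
        split <;> simp
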